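/- Let H be an ASC-hypergraph and M ⊆ H such that every M-antichain misses H. Then every X ∈ M has at least one X-superficial element, i.e., an element x ∈ X such that no proper subset of X belonging to M contains x. -/

import Mathlib

namespace HG

variable {α : Type*} [DecidableEq α]

/-- The carrier of a hypergraph: the union of its members. -/
def carrier (H : Finset (Finset α)) : Finset α := H.sup id

/-- A hypergraph (on its carrier) is a finite family of sets not containing `∅`. -/
def IsHypergraph (H : Finset (Finset α)) : Prop := ∅ ∉ H

/-- The restriction `H_Y = {X ∈ H ∣ X ⊆ Y}`. -/
def restrict (H : Finset (Finset α)) (Y : Finset α) : Finset (Finset α) :=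
  H.filter (· ⊆ Y)

/-- `x` and `y` are joined by a path of `H`: a nonempty sequence of distinct members
of `H`, consecutive members intersecting, the first containing `x`, the last `y`. -/
def Joined (H : Finset (Finset α)) (x y : α) : Prop :=
  ∃ (X : Finset α) (l : List (Finset α)),
    (X :: l).Nodup ∧ (∀ Z ∈ X :: l, Z ∈ H) ∧
    (X :: l).Chain' (fun A B => (A ∩ B).Nonempty) ∧
    x ∈ X ∧ y ∈ (X :: l).getLast (List.cons_ne_nil X l)

/-- Path-connectedness of a hypergraph: any two carrier elements are joined. -/
def Conn (H : Finset (Finset α)) : Prop :=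
  ∀ x ∈ carrier H, ∀ y ∈ carrier H, Joined H x y

/-- `P` is a hypergraph partition of `H`: a partition of `H` whose family of
carriers is a partition of the carrier of `H`. -/
def IsHGPartition (H : Finset (Finset α)) (P : Finset (Finset (Finset α))) : Prop :=
  (∀ Q ∈ P, Q ≠ ∅) ∧
  (∀ Q ∈ P, ∀ Q' ∈ P, Q ≠ Q' → Disjoint Q Q') ∧
  P.sup id = H ∧
  (∀ Q ∈ P, ∀ Q' ∈ P, Q ≠ Q' → Disjoint (carrier Q) (carrier Q'))

/-- A hypergraph is atomic when it contains all singletons of carrier elements. -/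
def Atomic (H : Finset (Finset α)) : Prop := ∀ x ∈ carrier H, {x} ∈ H

/-- A hypergraph is saturated when intersecting members have their union in it. -/
def Saturated (H : Finset (Finset α)) : Prop :=
  ∀ X ∈ H, ∀ Y ∈ H, (X ∩ Y).Nonempty → X ∪ Y ∈ H

/-- `Y` is dispensable in `H` when `(H_Y) \ {Y}` is a connected hypergraph on `Y`. -/
def Dispensable (H : Finset (Finset α)) (Y : Finset α) : Prop :=
  IsHypergraph ((restrict H Y).erase Y) ∧
  carrier ((restrict H Y).erase Y) = Y ∧
  Conn ((restrict H Y).erase Y)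

/-- `J` enhances `H` when `J = H ∪ {Y}` for some `Y ∉ H` dispensable in `H`. -/
def Enhances (J H : Finset (Finset α)) : Prop :=
  ∃ Y, Dispensable H Y ∧ Y ∉ H ∧ J = insert Y H

/-- Cognation: the equivalence closure of the enhancement relation. -/
def Cognate (H J : Finset (Finset α)) : Prop :=
  Relation.EqvGen Enhances H J

/-- The finest hypergraph partition: one all of whose parts are connected. -/
def FinestHGPartition (H : Finset (Finset α)) (P : Finset (Finset (Finset α))) : Prop :=
  IsHGPartition H P ∧ ∀ Q ∈ P, Conn Q

/-- Constructions of a hypergraph, defined recursively. -/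
inductive IsConstruction : Finset (Finset α) → Finset (Finset α) → Prop
  | empty : IsConstruction ∅ ∅
  | conn {H K : Finset (Finset α)} {x : α} :
      (carrier H).Nonempty → Conn H → x ∈ carrier H →
      IsConstruction (restrict H ((carrier H).erase x)) K →
      IsConstruction H (insert (carrier H) K)
  | parts {H : Finset (Finset α)} {P : Finset (Finset (Finset α))}
      {K : Finset (Finset α) → Finset (Finset α)} :
      2 ≤ (carrier H).card → ¬ Conn H → 2 ≤ P.card → FinestHGPartition H P →
      (∀ Q ∈ P, IsConstruction Q (K Q)) →
      IsConstruction H (P.sup K)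

/-- An `M`-antichain: at least two members of `M`, pairwise incomparable. -/
def IsAntichainIn (M S : Finset (Finset α)) : Prop :=
  S ⊆ M ∧ 2 ≤ S.card ∧ ∀ X ∈ S, ∀ Y ∈ S, X ≠ Y → ¬ X ⊆ Y ∧ ¬ Y ⊆ X

/-- `S` misses `H` when the union of `S` is not a member of `H`. -/
def Misses (H S : Finset (Finset α)) : Prop := S.sup id ∉ H

/-- `x` is `X`-superficial relative to `M`. -/
def Superficial (M : Finset (Finset α)) (X : Finset α) (x : α) : Prop :=
  x ∈ X ∧ ∀ Y ∈ M, Y ⊂ X → x ∉ Y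

/-- ASC-hypergraph: atomic, saturated and connected hypergraph. -/
def ASC (H : Finset (Finset α)) : Prop :=
  IsHypergraph H ∧ Atomic H ∧ Saturated H ∧ Conn H

end HG

open HG

theorem exists_superficial
    {α : Type*} [DecidableEq α]
    (H M : Finset (Finset α)) (hH : ASC H) (hM : M ⊆ H)
    (hmiss : ∀ S, IsAntichainIn M S → Misses H S) :
    ∀ X ∈ M, ∃ x, Superficial M X x := by
  
  intro X hX
  by_contra hno
  push_neg at hno
  -- every x ∈ X lies in some proper subset of X in M
  have hcov : ∀ x ∈ X, ∃ Y ∈ M, Y ⊂ X ∧ x ∈ Y := by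
    intro x hx
    have := hno x
    unfold Superficial at this
    push_neg at this
    obtain ⟨Y, hY, hYX, hxY⟩ := this hx
    exact ⟨Y, hY, hYX, hxY⟩
  classical
  set T : Finset (Finset α) := M.filter (· ⊂ X) with hT
  -- maximal elements of T
  set S : Finset (Finset α) := T.filter (fun Y => ∀ Z ∈ T, ¬ Y ⊂ Z) with hS
  -- every element of T is contained in a member of S
  have hext : ∀ Y ∈ T, ∃ Z ∈ S, Y ⊆ Z := by
    intro Y hY
    obtain ⟨Z, hZ, hZmax⟩ : ∃ Z ∈ T.filter (fun Z => Y ⊆ Z), ∀ W ∈ T.filter (fun Z => Y ⊆ Z), ¬ Z < W := by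
      obtain ⟨Z, hZ⟩ := Finset.exists_maximal (s := T.filter (fun Z => Y ⊆ Z))
        ⟨Y, Finset.mem_filter.2 ⟨hY, le_refl Y⟩⟩
      exact ⟨Z, hZ.1, fun W hW hlt => lt_irrefl _ (lt_of_lt_of_le hlt (hZ.2 hW hlt.le))⟩
    rw [Finset.mem_filter] at hZ
    refine ⟨Z, Finset.mem_filter.2 ⟨hZ.1, ?_⟩, hZ.2⟩
    intro W hW hZW
    exact hZmax W (Finset.mem_filter.2 ⟨hW, hZ.2.trans hZW.subset⟩) hZW
  -- S.sup id = X
  have hsub : S.sup id ⊆ X := by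
    show S.sup id ≤ X
    apply Finset.sup_le
    intro Y hY
    rw [hS, Finset.mem_filter, hT, Finset.mem_filter] at hY
    exact hY.1.2.subset
  have hsup : S.sup id = X := by
    apply Finset.Subset.antisymm hsub
    intro x hx
    obtain ⟨Y, hYM, hYX, hxY⟩ := hcov x hx
    obtain ⟨Z, hZ, hYZ⟩ := hext Y (Finset.mem_filter.2 ⟨hYM, hYX⟩)
    exact Finset.mem_sup.2 ⟨Z, hZ, hYZ hxY⟩
  -- S is nonempty since X is nonempty (∅ ∉ H)
  have hXne : X.Nonempty := by
    rcases X.eq_empty_or_nonempty with h | h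
    · exact absurd (h ▸ hM hX) hH.1
    · exact h
  obtain ⟨x, hx⟩ := id hXne
  obtain ⟨Y₀, hY₀M, hY₀X, hxY₀⟩ := hcov x hx
  obtain ⟨Z₀, hZ₀, _⟩ := hext Y₀ (Finset.mem_filter.2 ⟨hY₀M, hY₀X⟩)
  -- card S ≥ 2 : if S = {Z}, then Z = X but Z ⊂ X
  have hcard : 2 ≤ S.card := by
    by_contra h
    push_neg at h
    interval_cases hS' : S.card
    · rw [Finset.card_eq_zero] at hS'
      rw [hS', Finset.sup_empty] at hsup
      exact absurd hsup.symm (Finset.nonempty_iff_ne_empty.1 hXne)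
    · obtain ⟨Z, hZeq⟩ := Finset.card_eq_one.1 hS'
      have : Z ⊂ X := by
        have := hZ₀; rw [hZeq, Finset.mem_singleton] at this
        subst this
        rw [hS, Finset.mem_filter, hT, Finset.mem_filter] at hZ₀
        exact hZ₀.1.2
      rw [hZeq, Finset.sup_singleton, id] at hsup
      exact absurd hsup this.ne
  -- S is an antichain in M
  have hanti : IsAntichainIn M S := by
    refine ⟨?_, hcard, ?_⟩
    · intro Y hY
      rw [hS, Finset.mem_filter, hT, Finset.mem_filter] at hY
      exact hY.1.1
    · intro A hA B hB hAB
      rw [hS, Finset.mem_filter] at hA hB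
      constructor
      · intro hABsub
        exact hA.2 B hB.1 (lt_of_le_of_ne hABsub hAB)
      · intro hBAsub
        exact hB.2 A hA.1 (lt_of_le_of_ne hBAsub (Ne.symm hAB))
  have := hmiss S hanti
  rw [Misses, hsup] at this
  exact this (hM hX)
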